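/- Let X_1, ..., X_n be i.i.d. random vectors in the ℓ_∞-ball of radius r in R^d with s-sparse mean θ (||θ||_0 ≤ s), and let X̄ be the sample mean. Define τ_s = |X̄|_{(s+1)} (the (s+1)-st largest absolute coordinate of X̄) and θ̂_j = sign(X̄_j)(|X̄_j| - τ_s)_+. Then for every u ≥ 0, with probability at least 1 - e^{-u}, ||θ̂ - θ||_2 ≤ 8r√(s(log(4d) + u)/n). -/

import Mathlib

open MeasureTheory Finset Real ProbabilityTheory


lemma exp_le_cosh_add (c t y : ℝ) (hc : 0 < c) (hy : |y| ≤ c) :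
    Real.exp (t * y) ≤ Real.cosh (t * c) + (y / c) * Real.sinh (t * c) := by
  have h1 : -c ≤ y := (abs_le.mp hy).1
  have h2 : y ≤ c := (abs_le.mp hy).2
  set a := (c + y) / (2 * c) with ha
  set b := (c - y) / (2 * c) with hb
  have hab : a + b = 1 := by rw [ha, hb]; field_simp; ring
  have ha0 : 0 ≤ a := div_nonneg (by linarith) (by positivity)
  have hb0 : 0 ≤ b := by
    apply div_nonneg (by linarith) (by positivity)
  have hconv := convexOn_exp.2 (Set.mem_univ (t * c)) (Set.mem_univ (-(t * c))) ha0 hb0 hab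
  have hyeq : a • (t * c) + b • (-(t * c)) = t * y := by
    simp only [smul_eq_mul, ha, hb]; field_simp; ring
  rw [hyeq] at hconv
  refine hconv.trans_eq ?_
  simp only [smul_eq_mul, Real.cosh_eq, Real.sinh_eq, Real.exp_neg, ha, hb]
  have hec : Real.exp (t * c) ≠ 0 := (Real.exp_pos _).ne'
  field_simp
  ring

lemma mgf_aux {Ω : Type*} [MeasurableSpace Ω] (μ : Measure Ω) [IsProbabilityMeasure μ]
    (Y : Ω → ℝ) (c t : ℝ) (hc : 0 < c) (hY : ∀ᵐ ω ∂μ, |Y ω| ≤ c)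
    (hmeas : Measurable Y) (hmean : ∫ ω, Y ω ∂μ = 0) :
    ∫ ω, Real.exp (t * Y ω) ∂μ ≤ Real.exp (t ^ 2 * c ^ 2 / 2) := by
  have hYint : Integrable Y μ :=
    Integrable.mono' (integrable_const c) hmeas.aestronglyMeasurable
      (hY.mono fun ω h => by simpa using h)
  have hexpint : Integrable (fun ω => Real.exp (t * Y ω)) μ := by
    refine Integrable.mono' (integrable_const (Real.exp (|t| * c)))
      ((Real.measurable_exp.comp (measurable_const.mul hmeas)).aestronglyMeasurable) (hY.mono fun ω h => ?_)
    rw [Real.norm_eq_abs, Real.abs_exp]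
    apply Real.exp_le_exp.mpr
    calc t * Y ω ≤ |t * Y ω| := le_abs_self _
      _ = |t| * |Y ω| := abs_mul _ _
      _ ≤ |t| * c := by gcongr
  have hrhsint : Integrable (fun ω => Real.cosh (t * c) + (Y ω / c) * Real.sinh (t * c)) μ := by
    apply Integrable.add (integrable_const _)
    exact ((hYint.div_const c).mul_const _)
  calc ∫ ω, Real.exp (t * Y ω) ∂μ
      ≤ ∫ ω, Real.cosh (t * c) + (Y ω / c) * Real.sinh (t * c) ∂μ := by
        refine integral_mono_ae hexpint hrhsint (hY.mono fun ω h => ?_)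
        exact exp_le_cosh_add c t (Y ω) hc h
    _ = Real.cosh (t * c) := by
        rw [integral_add (integrable_const _) ((hYint.div_const c).mul_const _),
          integral_const, integral_mul_const, integral_div, hmean]
        simp
    _ ≤ Real.exp ((t * c) ^ 2 / 2) := Real.cosh_le_exp_half_sq _
    _ = Real.exp (t ^ 2 * c ^ 2 / 2) := by rw [mul_pow]

lemma tail_aux {Ω : Type*} [MeasurableSpace Ω] (P : Measure Ω) [IsProbabilityMeasure P]
    (n : ℕ) (hn : 1 ≤ n) (Y : Ω → ℝ) (c : ℝ) (hc : 0 < c)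
    (hY : ∀ᵐ ω ∂P, |Y ω| ≤ c) (hmeas : Measurable Y) (hmean : ∫ ω, Y ω ∂P = 0)
    (ε : ℝ) (hε : 0 ≤ ε)
    (hmgf : ∀ t : ℝ, ∫ ω, Real.exp (t * Y ω) ∂P ≤ Real.exp (t ^ 2 * c ^ 2 / 2)) :
    ((Measure.pi fun _ : Fin n => P) {D : Fin n → Ω | (n : ℝ) * ε ≤ ∑ i, Y (D i)}).toReal
      ≤ Real.exp (-(n : ℝ) * ε ^ 2 / (2 * c ^ 2)) := by
  letI : MeasureSpace Ω := ⟨P⟩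
  set μ : Measure (Fin n → Ω) := Measure.pi fun _ : Fin n => P with hμ
  haveI : IsProbabilityMeasure μ := by rw [hμ]; infer_instance
  set t : ℝ := ε / c ^ 2 with ht
  have ht0 : 0 ≤ t := div_nonneg hε (by positivity)
  -- a.e. boundedness on the product
  have haebdd : ∀ᵐ D ∂μ, ∀ i, |Y (D i)| ≤ c := by
    rw [ae_all_iff]
    intro i
    have h0 : P {ω | ¬ |Y ω| ≤ c} = 0 := hY
    have : μ ((fun D : Fin n → Ω => D i) ⁻¹' {ω | ¬ |Y ω| ≤ c}) = 0 := by
      rw [hμ]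
      exact Measure.pi_eval_preimage_null _ h0
    exact this
  have hint : Integrable (fun D : Fin n → Ω => Real.exp (t * ∑ i, Y (D i))) μ := by
    refine Integrable.mono' (integrable_const (Real.exp (t * (n * c))))
      ((Real.measurable_exp.comp (measurable_const.mul
        (Finset.measurable_sum univ fun i _ => hmeas.comp (measurable_pi_apply i)))).aestronglyMeasurable)
      (haebdd.mono fun D h => ?_)
    rw [Real.norm_eq_abs, Real.abs_exp]
    apply Real.exp_le_exp.mpr
    apply mul_le_mul_of_nonneg_left _ ht0
    calc ∑ i, Y (D i) ≤ ∑ i : Fin n, c := Finset.sum_le_sum fun i _ => (abs_le.mp (h i)).2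
      _ = n * c := by simp [mul_comm]
  have hchern := measure_ge_le_exp_mul_mgf (μ := μ) (X := fun D => ∑ i, Y (D i))
    ((n : ℝ) * ε) ht0 hint
  refine hchern.trans ?_
  -- compute the mgf
  have hmgfeq : mgf (fun D : Fin n → Ω => ∑ i, Y (D i)) μ t
      = (∫ ω, Real.exp (t * Y ω) ∂P) ^ n := by
    rw [mgf]
    have : ∀ D : Fin n → Ω, Real.exp (t * ∑ i, Y (D i)) = ∏ i, Real.exp (t * Y (D i)) := by
      intro D
      rw [Finset.mul_sum, Real.exp_sum]
    simp_rw [this]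
    have := MeasureTheory.integral_fintype_prod_eq_pow (ι := Fin n) (μ := P)
      (fun ω : Ω => Real.exp (t * Y ω))
    simpa [MeasureTheory.volume_pi, hμ] using this
  rw [hmgfeq]
  have hstep : (∫ ω, Real.exp (t * Y ω) ∂P) ^ n ≤ Real.exp (t ^ 2 * c ^ 2 / 2) ^ n := by
    apply pow_le_pow_left₀ (integral_nonneg fun ω => (Real.exp_pos _).le) (hmgf t)
  calc Real.exp (-t * ((n : ℝ) * ε)) * (∫ ω, Real.exp (t * Y ω) ∂P) ^ n
      ≤ Real.exp (-t * ((n : ℝ) * ε)) * Real.exp (t ^ 2 * c ^ 2 / 2) ^ n := by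
        apply mul_le_mul_of_nonneg_left hstep (Real.exp_pos _).le
    _ = Real.exp (-t * ((n : ℝ) * ε) + n * (t ^ 2 * c ^ 2 / 2)) := by
        rw [← Real.exp_nat_mul, ← Real.exp_add]
    _ = Real.exp (-(n : ℝ) * ε ^ 2 / (2 * c ^ 2)) := by
        congr 1
        rw [ht]
        field_simp
        ring

lemma det_aux (d s : ℕ) (hsd : s + 1 ≤ d) (m θ : Fin d → ℝ) (t0 : ℝ) (ht0 : 0 ≤ t0)
    (k : Fin d) (hk : (k : ℕ) = d - s - 1)
    (hclose : ∀ j, |m j - θ j| ≤ t0)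
    (hsparse : {j : Fin d | θ j ≠ 0}.ncard ≤ s) :
    Real.sqrt (∑ j : Fin d,
        (Real.sign (m j) * max (|m j| - |m ((Tuple.sort fun j' : Fin d => |m j'|) k)|) 0
          - θ j) ^ 2)
      ≤ Real.sqrt (8 * s) * t0 := by
  set f : Fin d → ℝ := fun j => |m j| with hf
  set σ := Tuple.sort f with hσ
  set τ := f (σ k) with hτdef
  have hτ0 : 0 ≤ τ := abs_nonneg _
  -- finset of support of θ
  set S : Finset (Fin d) := univ.filter (fun j => θ j ≠ 0) with hS
  have hScard : S.card ≤ s := by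
    have : (S : Set (Fin d)) = {j : Fin d | θ j ≠ 0} := by ext j; simp [hS]
    rw [← Set.ncard_coe_finset, this]; exact hsparse
  -- coordinates outside S have small |m|
  have hsmall : ∀ j, θ j = 0 → f j ≤ t0 := by
    intro j hj
    have := hclose j
    rw [hj, sub_zero] at this
    exact this
  -- τ ≤ t0
  have hτ : τ ≤ t0 := by
    by_contra hcon
    push_neg at hcon
    have hmono := Tuple.monotone_sort f
    have hinj : ∀ j ∈ Finset.Ici k, σ j ∈ S := by
      intro j hj
      have hle : τ ≤ f (σ j) := hmono (Finset.mem_Ici.mp hj)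
      simp only [hS, mem_filter, mem_univ, true_and]
      intro h0
      exact absurd (hsmall (σ j) h0) (not_le.mpr (lt_of_lt_of_le hcon hle))
    have hcard := Finset.card_le_card_of_injOn (fun j => σ j) hinj
      (fun a _ b _ h => σ.injective h)
    rw [Fin.card_Ici, hk] at hcard
    omega
  -- support of estimator is small
  set T : Finset (Fin d) := univ.filter (fun j => τ < f j) with hT
  have hTcard : T.card ≤ s := by
    have hmono := Tuple.monotone_sort f
    have hinj : ∀ j ∈ T, σ.symm j ∈ Finset.Ioi k := by
      intro j hj
      simp only [hT, mem_filter] at hj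
      rw [Finset.mem_Ioi]
      by_contra hcon
      push_neg at hcon
      have : f (σ (σ.symm j)) ≤ τ := hmono hcon
      rw [Equiv.apply_symm_apply] at this
      exact absurd this (not_le.mpr hj.2)
    have hcard := Finset.card_le_card_of_injOn (fun j => σ.symm j) hinj
      (fun a _ b _ h => σ.symm.injective h)
    rw [Fin.card_Ioi, hk] at hcard
    omega
  -- estimator
  set est : Fin d → ℝ := fun j => Real.sign (m j) * max (|m j| - τ) 0 with hest
  have hest_near : ∀ j, |est j - m j| ≤ τ := by
    intro j
    rcases le_or_gt (|m j|) τ with h | h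
    · have : est j = 0 := by
        simp [hest, max_eq_right (by linarith : |m j| - τ ≤ 0)]
      rw [this, zero_sub, abs_neg]
      exact le_trans (le_refl _) h
    · have hne : m j ≠ 0 := by
        intro h0; rw [h0, abs_zero] at h; exact absurd h (not_lt.mpr hτ0)
      have hmax : max (|m j| - τ) 0 = |m j| - τ := max_eq_left (by linarith)
      rcases hne.lt_or_gt with hneg | hpos
      · rw [hest]
        simp only
        rw [hmax, Real.sign_of_neg hneg, abs_of_neg hneg]
        have : -1 * (-m j - τ) - m j = τ := by ring
        rw [this, abs_of_nonneg hτ0]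
      · rw [hest]
        simp only
        rw [hmax, Real.sign_of_pos hpos, abs_of_pos hpos]
        have : 1 * (m j - τ) - m j = -τ := by ring
        rw [this, abs_neg, abs_of_nonneg hτ0]
  have hcoord : ∀ j, |est j - θ j| ≤ 2 * t0 := by
    intro j
    calc |est j - θ j| ≤ |est j - m j| + |m j - θ j| := abs_sub_le _ _ _
      _ ≤ τ + t0 := add_le_add (hest_near j) (hclose j)
      _ ≤ 2 * t0 := by linarith
  have hzero : ∀ j ∉ S ∪ T, est j - θ j = 0 := by
    intro j hj
    simp only [mem_union, hS, hT, mem_filter, mem_univ, true_and, not_or, not_not,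
      not_lt] at hj
    have h1 : est j = 0 := by
      simp [hest, max_eq_right (by linarith [hj.2] : |m j| - τ ≤ 0)]
    rw [h1, hj.1, sub_zero]
  -- sum bound
  have hsum : ∑ j : Fin d, (est j - θ j) ^ 2 ≤ 8 * s * t0 ^ 2 := by
    have h1 : ∑ j : Fin d, (est j - θ j) ^ 2 = ∑ j ∈ S ∪ T, (est j - θ j) ^ 2 := by
      symm
      apply Finset.sum_subset (Finset.subset_univ _)
      intro j _ hj
      rw [hzero j hj]; ring
    rw [h1]
    calc ∑ j ∈ S ∪ T, (est j - θ j) ^ 2 ≤ ∑ _j ∈ S ∪ T, (2 * t0) ^ 2 := by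
          apply Finset.sum_le_sum
          intro j _
          have := hcoord j
          calc (est j - θ j) ^ 2 = |est j - θ j| ^ 2 := (sq_abs _).symm
            _ ≤ (2 * t0) ^ 2 := by nlinarith [abs_nonneg (est j - θ j)]
      _ = (S ∪ T).card * (2 * t0) ^ 2 := by rw [Finset.sum_const]; ring
      _ ≤ (2 * s) * (2 * t0) ^ 2 := by
          have : (S ∪ T).card ≤ 2 * s := by
            have := Finset.card_union_le S T
            omega
          apply mul_le_mul_of_nonneg_right _ (by positivity)
          exact_mod_cast this
      _ = 8 * s * t0 ^ 2 := by ring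
  calc Real.sqrt (∑ j : Fin d, (est j - θ j) ^ 2)
      ≤ Real.sqrt (8 * s * t0 ^ 2) := Real.sqrt_le_sqrt hsum
    _ = Real.sqrt (8 * s) * t0 := by
        rw [Real.sqrt_mul (by positivity), Real.sqrt_sq ht0]


theorem sparse_mean_soft_threshold_tail (n d s : ℕ) (hn : 1 ≤ n) (hsd : s + 1 ≤ d)
    (r : ℝ) (hr : 0 < r) (u : ℝ) (hu : 0 ≤ u)
    (P : Measure (Fin d → ℝ)) [IsProbabilityMeasure P]
    (hbdd : ∀ᵐ x ∂P, ∀ j, |x j| ≤ r)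
    (hsparse : {j : Fin d | (∫ x, x j ∂P) ≠ 0}.ncard ≤ s) :
    ENNReal.ofReal (1 - Real.exp (-u)) ≤
      (Measure.pi fun _ : Fin n => P)
        {D : Fin n → Fin d → ℝ |
          Real.sqrt (∑ j : Fin d,
            (Real.sign ((∑ i, D i j) / (n : ℝ)) *
              max (|(∑ i, D i j) / (n : ℝ)| -
                |(∑ i, D i ((Tuple.sort fun j' : Fin d => |(∑ i, D i j') / (n : ℝ)|)
                    ⟨d - s - 1, Nat.sub_lt (Nat.lt_of_lt_of_le (Nat.succ_pos s) hsd) (Nat.succ_pos s)⟩)) / (n : ℝ)|) 0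
             - ∫ x, x j ∂P) ^ 2)
          ≤ 8 * r * Real.sqrt ((s : ℝ) * (Real.log (4 * d) + u) / n)} := by
  classical
  set μ : Measure (Fin n → Fin d → ℝ) := Measure.pi fun _ : Fin n => P with hμdef
  haveI : IsProbabilityMeasure μ := by rw [hμdef]; infer_instance
  have hd1 : 1 ≤ d := le_trans (Nat.le_add_left 1 s) hsd
  set θ : Fin d → ℝ := fun j => ∫ x, x j ∂P with hθdef
  set L : ℝ := Real.log (4 * d) + u with hLdef
  have hL0 : 0 ≤ L := by
    have h4d : (1 : ℝ) ≤ 4 * d := by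
      have : (1 : ℝ) ≤ (d : ℝ) := by exact_mod_cast hd1
      linarith
    have := Real.log_nonneg h4d
    positivity
  have hn0 : (0 : ℝ) < n := by exact_mod_cast hn
  set t0 : ℝ := 2 * r * Real.sqrt (2 * L / n) with ht0def
  have ht00 : 0 ≤ t0 := by positivity
  -- per-coordinate facts
  have hintj : ∀ j, Integrable (fun x => x j) P := fun j =>
    Integrable.mono' (integrable_const r) (measurable_pi_apply j).aestronglyMeasurable
      (hbdd.mono fun x h => by simpa using h j)
  have hθbdd : ∀ j, |θ j| ≤ r := by
    intro j
    have h0 : |θ j| ≤ ∫ x, |x j| ∂P := by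
      simpa [Real.norm_eq_abs] using norm_integral_le_integral_norm (μ := P) (fun x => x j)
    calc |θ j| ≤ ∫ x, |x j| ∂P := h0
      _ ≤ ∫ _x, r ∂P :=
        integral_mono_ae (hintj j).abs (integrable_const r) (hbdd.mono fun x h => h j)
      _ = r := by simp
  -- tail bound for each one-sided event
  have htail : ∀ (Y : (Fin d → ℝ) → ℝ), Measurable Y → (∀ᵐ x ∂P, |Y x| ≤ 2 * r) →
      (∫ x, Y x ∂P) = 0 →
      μ {D : Fin n → Fin d → ℝ | (n : ℝ) * t0 ≤ ∑ i, Y (D i)}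
        ≤ ENNReal.ofReal (Real.exp (-u) / (4 * d)) := by
    intro Y hmeas hbY hmean
    have h2r : (0 : ℝ) < 2 * r := by linarith
    have hmgf := fun t => mgf_aux P Y (2 * r) t h2r hbY hmeas hmean
    have h := tail_aux P n hn Y (2 * r) h2r hbY hmeas hmean t0 ht00 hmgf
    rw [ENNReal.le_ofReal_iff_toReal_le (measure_ne_top _ _) (by positivity)]
    refine h.trans ?_
    have hexp : -(n : ℝ) * t0 ^ 2 / (2 * (2 * r) ^ 2) = -L := by
      rw [ht0def, mul_pow, mul_pow, Real.sq_sqrt (by positivity)]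
      field_simp
    rw [hexp, hLdef, neg_add, Real.exp_add, Real.exp_neg (Real.log (4 * d)),
      Real.exp_log (by positivity)]
    rw [div_eq_mul_inv, mul_comm]
  -- bad events
  set bad : Fin d → Set (Fin n → Fin d → ℝ) :=
    fun j => {D | t0 < |(∑ i, D i j) / (n : ℝ) - θ j|} with hbaddef
  have hbadj : ∀ j, μ (bad j) ≤ ENNReal.ofReal (Real.exp (-u) / (2 * d)) := by
    intro j
    have hY1 : Measurable (fun x : Fin d → ℝ => x j - θ j) :=
      (measurable_pi_apply j).sub measurable_const
    have hY2 : Measurable (fun x : Fin d → ℝ => θ j - x j) :=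
      measurable_const.sub (measurable_pi_apply j)
    have hb1 : ∀ᵐ x ∂P, |x j - θ j| ≤ 2 * r := by
      refine hbdd.mono fun x h => ?_
      calc |x j - θ j| ≤ |x j| + |θ j| := abs_sub _ _
        _ ≤ r + r := add_le_add (h j) (hθbdd j)
        _ = 2 * r := by ring
    have hb2 : ∀ᵐ x ∂P, |θ j - x j| ≤ 2 * r := by
      refine hb1.mono fun x h => ?_
      rwa [abs_sub_comm]
    have hm1 : (∫ x, (x j - θ j) ∂P) = 0 := by
      rw [integral_sub (hintj j) (integrable_const _), integral_const]
      simp [hθdef]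
    have hm2 : (∫ x, (θ j - x j) ∂P) = 0 := by
      rw [integral_sub (integrable_const _) (hintj j), integral_const]
      simp [hθdef]
    have hup := htail _ hY1 hb1 hm1
    have hdn := htail _ hY2 hb2 hm2
    have hsub : bad j ⊆ {D : Fin n → Fin d → ℝ | (n : ℝ) * t0 ≤ ∑ i, (D i j - θ j)}
        ∪ {D : Fin n → Fin d → ℝ | (n : ℝ) * t0 ≤ ∑ i, (θ j - D i j)} := by
      intro D hD
      simp only [hbaddef, Set.mem_setOf_eq] at hD
      have hsum1 : ∑ i, (D i j - θ j) = (n : ℝ) * ((∑ i, D i j) / (n : ℝ) - θ j) := by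
        rw [Finset.sum_sub_distrib, Finset.sum_const]
        field_simp
        rw [Finset.card_univ, Fintype.card_fin, nsmul_eq_mul]
      have hsum2 : ∑ i, (θ j - D i j) = -((n : ℝ) * ((∑ i, D i j) / (n : ℝ) - θ j)) := by
        rw [Finset.sum_sub_distrib, Finset.sum_const]
        field_simp
        rw [Finset.card_univ, Fintype.card_fin, nsmul_eq_mul]
        ring
      rcases abs_cases ((∑ i, D i j) / (n : ℝ) - θ j) with ⟨heq, _⟩ | ⟨heq, _⟩
      · left
        simp only [Set.mem_setOf_eq, hsum1]
        rw [heq] at hD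
        have := mul_le_mul_of_nonneg_left hD.le (le_of_lt hn0)
        linarith
      · right
        simp only [Set.mem_setOf_eq, hsum2]
        rw [heq] at hD
        nlinarith
    calc μ (bad j) ≤ _ := measure_mono hsub
      _ ≤ _ + _ := measure_union_le _ _
      _ ≤ ENNReal.ofReal (Real.exp (-u) / (4 * d)) + ENNReal.ofReal (Real.exp (-u) / (4 * d)) :=
          add_le_add hup hdn
      _ = ENNReal.ofReal (Real.exp (-u) / (4 * d) + Real.exp (-u) / (4 * d)) :=
          (ENNReal.ofReal_add (by positivity) (by positivity)).symm
      _ = ENNReal.ofReal (Real.exp (-u) / (2 * d)) := by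
          congr 1
          have : (0:ℝ) < d := by exact_mod_cast hd1
          field_simp
          ring
  have hbadtotal : μ (⋃ j, bad j) ≤ ENNReal.ofReal (Real.exp (-u) / 2) := by
    calc μ (⋃ j, bad j) ≤ ∑' j, μ (bad j) := measure_iUnion_le _
      _ ≤ ∑' (_x : Fin d), ENNReal.ofReal (Real.exp (-u) / (2 * d)) := ENNReal.tsum_le_tsum hbadj
      _ = (d : ENNReal) * ENNReal.ofReal (Real.exp (-u) / (2 * d)) := by
          rw [tsum_fintype]
          simp [Finset.sum_const, Finset.card_univ]
      _ = ENNReal.ofReal ((d : ℝ) * (Real.exp (-u) / (2 * d))) := by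
          rw [ENNReal.ofReal_mul (by positivity), ENNReal.ofReal_natCast]
      _ = ENNReal.ofReal (Real.exp (-u) / 2) := by
          congr 1
          have : (0:ℝ) < d := by exact_mod_cast hd1
          field_simp
  -- the good event is inside the target
  set target : Set (Fin n → Fin d → ℝ) :=
    {D : Fin n → Fin d → ℝ |
          Real.sqrt (∑ j : Fin d,
            (Real.sign ((∑ i, D i j) / (n : ℝ)) *
              max (|(∑ i, D i j) / (n : ℝ)| -
                |(∑ i, D i ((Tuple.sort fun j' : Fin d => |(∑ i, D i j') / (n : ℝ)|)
                    ⟨d - s - 1, Nat.sub_lt (Nat.lt_of_lt_of_le (Nat.succ_pos s) hsd) (Nat.succ_pos s)⟩)) / (n : ℝ)|) 0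
             - ∫ x, x j ∂P) ^ 2)
          ≤ 8 * r * Real.sqrt ((s : ℝ) * (Real.log (4 * d) + u) / n)} with htargetdef
  have hgood : ∀ D, D ∉ ⋃ j, bad j → D ∈ target := by
    intro D hD
    simp only [Set.mem_iUnion, hbaddef, Set.mem_setOf_eq, not_exists, not_lt] at hD
    have hdet := det_aux d s hsd (fun j => (∑ i, D i j) / (n : ℝ)) θ t0 ht00
      ⟨d - s - 1, Nat.sub_lt (Nat.lt_of_lt_of_le (Nat.succ_pos s) hsd) (Nat.succ_pos s)⟩ rfl
      hD hsparse
    simp only [htargetdef, Set.mem_setOf_eq]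
    refine hdet.trans ?_
    -- √(8s) * t0 = 8 r √(s L / n)
    rw [ht0def]
    rw [show Real.sqrt (8 * s) * (2 * r * Real.sqrt (2 * L / n))
        = 2 * r * (Real.sqrt (8 * s) * Real.sqrt (2 * L / n)) by ring]
    rw [← Real.sqrt_mul (by positivity)]
    rw [show (8 * (s:ℝ)) * (2 * L / n) = 16 * ((s:ℝ) * L / n) by ring]
    rw [Real.sqrt_mul (by norm_num), show (16:ℝ) = 4 ^ 2 by norm_num, Real.sqrt_sq (by norm_num)]
    rw [hLdef]
    ring_nf
    exact le_rfl
  -- conclude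
  have hone : (1 : ENNReal) ≤ μ target + ENNReal.ofReal (Real.exp (-u) / 2) := by
    have hsub : (Set.univ : Set (Fin n → Fin d → ℝ)) ⊆ target ∪ ⋃ j, bad j := by
      intro D _
      by_cases h : D ∈ ⋃ j, bad j
      · exact Or.inr h
      · exact Or.inl (hgood D h)
    calc (1 : ENNReal) = μ Set.univ := (measure_univ).symm
      _ ≤ μ (target ∪ ⋃ j, bad j) := measure_mono hsub
      _ ≤ μ target + μ (⋃ j, bad j) := measure_union_le _ _
      _ ≤ μ target + ENNReal.ofReal (Real.exp (-u) / 2) := add_le_add_right hbadtotal _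
  have hexp1 : Real.exp (-u) ≤ 1 := Real.exp_le_one_iff.mpr (by linarith)
  have key : ENNReal.ofReal (1 - Real.exp (-u)) + ENNReal.ofReal (Real.exp (-u) / 2)
      ≤ μ target + ENNReal.ofReal (Real.exp (-u) / 2) := by
    refine le_trans ?_ hone
    rw [← ENNReal.ofReal_add (by linarith) (by positivity)]
    calc ENNReal.ofReal (1 - Real.exp (-u) + Real.exp (-u) / 2)
        ≤ ENNReal.ofReal 1 := ENNReal.ofReal_le_ofReal (by linarith [Real.exp_pos (-u)])
      _ = 1 := ENNReal.ofReal_one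
  exact (ENNReal.add_le_add_iff_right ENNReal.ofReal_ne_top).mp key
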